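/- For every positive integer n and all convex subsets x, y_1, …, y_{n+1} of ℝⁿ each containing the origin 0, the relation D_n^op(x, y_1, …, y_{n+1}) holds, i.e. convexHull(x ∪ ⋂_{i=1}^{n+1} y_i) = ⋂_{i=1}^{n+1} convexHull(x ∪ ⋂_{j≠i} y_j). (Thus the lattice Conv(ℝⁿ)_{≥{0}} of convex sets containing 0 satisfies the identity D_n^op.) -/

import Mathlib

open Finset Set

/-- A sub-convex combination (weights summing to at most 1) of points of a convex set
containing `0` is in the set; points with zero weight need not be in the set. -/
lemma subcombo_mem {V : Type*} [AddCommGroup V] [Module ℝ V] {ι : Type*} [Fintype ι]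
    {Y : Set V} (hY : Convex ℝ Y) (h0 : (0 : V) ∈ Y) (w : ι → ℝ) (b : ι → V)
    (hw : ∀ i, 0 ≤ w i) (hw1 : ∑ i, w i ≤ 1) (hb : ∀ i, w i ≠ 0 → b i ∈ Y) :
    (∑ i, w i • b i) ∈ Y := by
  classical
  have key := hY.sum_mem (t := (Finset.univ : Finset (Option ι)))
    (w := fun o => o.elim (1 - ∑ i, w i) w)
    (z := fun o => o.elim 0 (fun i => if w i = 0 then 0 else b i))
    ?_ ?_ ?_
  · have heq : ∑ o : Option ι, (o.elim (1 - ∑ i, w i) w) •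
        (o.elim 0 (fun i => if w i = 0 then 0 else b i) : V) = ∑ i, w i • b i := by
      rw [Fintype.sum_option]
      simp only [Option.elim, smul_zero, zero_add]
      refine Finset.sum_congr rfl fun i _ => ?_
      by_cases h : w i = 0 <;> simp [h]
    rwa [heq] at key
  · rintro (_ | i) _
    · simpa using hw1
    · exact hw i
  · rw [Fintype.sum_option]; simp
  · rintro (_ | i) _
    · exact h0
    · by_cases h : w i = 0
      · simpa [h] using h0
      · simpa [h] using hb i h

/-- For every positive integer `n` and all convex subsets `x, y₁, …, y_{n+1}` of `ℝⁿ` each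
containing the origin, `D_n^op(x, y₁, …, y_{n+1})` holds; thus `Conv(ℝⁿ)_{≥{0}}`
satisfies `D_n^op`. -/
theorem conv_ge_zero_Dn_op (n : ℕ) (hn : 0 < n) (x : Set (Fin n → ℝ))
    (y : Fin (n + 1) → Set (Fin n → ℝ))
    (hx : Convex ℝ x) (hy : ∀ i, Convex ℝ (y i))
    (hx0 : (0 : Fin n → ℝ) ∈ x) (hy0 : ∀ i, (0 : Fin n → ℝ) ∈ y i) :
    convexHull ℝ (x ∪ ⋂ i, y i) =
      ⋂ i, convexHull ℝ (x ∪ ⋂ j, ⋂ (_ : j ≠ i), y j) := by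
  classical
  set z : Fin (n + 1) → Set (Fin n → ℝ) := fun i => ⋂ j, ⋂ (_ : j ≠ i), y j with hz_def
  have hz : ∀ i, Convex ℝ (z i) := fun i =>
    convex_iInter fun j => convex_iInter fun _ => hy j
  have hz0 : ∀ i, (0 : Fin n → ℝ) ∈ z i := fun i => by
    simp only [hz_def, mem_iInter]; exact fun j _ => hy0 j
  have hzy : ∀ i j, i ≠ j → ∀ v ∈ z i, v ∈ y j := by
    intro i j hij v hv
    simp only [hz_def, mem_iInter] at hv
    exact hv j (Ne.symm hij)
  apply Set.Subset.antisymm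
  · -- easy inclusion
    refine Set.subset_iInter fun i => convexHull_mono ?_
    refine Set.union_subset_union_right x ?_
    intro v hv
    simp only [mem_iInter] at hv ⊢
    exact fun j _ => hv j
  · intro p hp
    by_cases hpx : p ∈ x
    · exact subset_convexHull ℝ _ (Or.inl hpx)
    -- unpack the memberships
    have hmem : ∀ i, ∃ a ∈ x, ∃ b ∈ z i, p ∈ segment ℝ a b := by
      intro i
      have hpi := (mem_iInter.mp hp) i
      rw [convexHull_union ⟨0, hx0⟩ ⟨0, hz0 i⟩, hx.convexHull_eq,
        (hz i).convexHull_eq] at hpi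
      exact mem_convexJoin.mp hpi
    choose a ha b hb seg using hmem
    have hseg : ∀ i, ∃ u v : ℝ, 0 ≤ u ∧ 0 ≤ v ∧ u + v = 1 ∧ u • a i + v • b i = p :=
      fun i => seg i
    choose u v hu hv huv hp' using hseg
    have hvpos : ∀ i, 0 < v i := by
      intro i
      rcases (hv i).lt_or_eq with h | h
      · exact h
      · exfalso; apply hpx
        have hu1 : u i = 1 := by linarith [huv i]
        have hpa : p = a i := by rw [← hp' i, ← h, hu1]; simp
        rw [hpa]; exact ha i
    have hv1 : ∀ i, v i ≤ 1 := fun i => by linarith [huv i, hu i]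
    -- linear dependence of the b i
    have hdep : ¬ LinearIndependent ℝ b := by
      intro h
      have := h.fintype_card_le_finrank
      rw [Module.finrank_fin_fun, Fintype.card_fin] at this
      omega
    obtain ⟨g₀, hg₀sum, i₀, hi₀⟩ := Fintype.not_linearIndependent_iff.mp hdep
    -- normalize the sign so that the positive part dominates
    have hkey : ∃ g : Fin (n + 1) → ℝ, ∑ i, g i • b i = 0 ∧
        0 < ∑ i, max (g i) 0 ∧ ∑ i, max (-g i) 0 ≤ ∑ i, max (g i) 0 := by
      have hpos : 0 < ∑ i, (max (g₀ i) 0 + max (-g₀ i) 0) := by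
        refine Finset.sum_pos' (fun i _ => by positivity) ⟨i₀, Finset.mem_univ _, ?_⟩
        rcases lt_or_gt_of_ne hi₀ with h | h
        · have h1 : 0 < max (-g₀ i₀) 0 := lt_max_iff.mpr (Or.inl (by linarith))
          have h2 : (0:ℝ) ≤ max (g₀ i₀) 0 := le_max_right _ _
          linarith
        · have h1 : 0 < max (g₀ i₀) 0 := lt_max_iff.mpr (Or.inl h)
          have h2 : (0:ℝ) ≤ max (-g₀ i₀) 0 := le_max_right _ _
          linarith
      rw [Finset.sum_add_distrib] at hpos
      rcases le_total (∑ i, max (-g₀ i) 0) (∑ i, max (g₀ i) 0) with h | h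
      · exact ⟨g₀, hg₀sum, by linarith, h⟩
      · refine ⟨-g₀, ?_, by simpa using (by linarith : 0 < ∑ i, max (-g₀ i) 0), ?_⟩
        · simp only [Pi.neg_apply, neg_smul]
          rw [Finset.sum_neg_distrib, hg₀sum, neg_zero]
        · simpa using h
    obtain ⟨g, hgsum, hσpos, hσle⟩ := hkey
    set σ : ℝ := ∑ i, max (g i) 0 with hσ_def
    set m : Fin (n + 1) → ℝ := fun i => max (g i) 0 / σ with hm_def
    set m' : Fin (n + 1) → ℝ := fun i => max (-g i) 0 / σ with hm'_def
    have hm : ∀ i, 0 ≤ m i := fun i => by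
      apply div_nonneg (le_max_right _ _) hσpos.le
    have hm' : ∀ i, 0 ≤ m' i := fun i => by
      apply div_nonneg (le_max_right _ _) hσpos.le
    have hm1 : ∑ i, m i = 1 := by
      simp only [hm_def]
      rw [← Finset.sum_div, ← hσ_def, div_self hσpos.ne']
    have hm'1 : ∑ i, m' i ≤ 1 := by
      simp only [hm'_def]
      rw [← Finset.sum_div]
      exact (div_le_one hσpos).mpr hσle
    set c : Fin n → ℝ := ∑ i, m i • b i with hc_def
    have hc' : ∑ i, m' i • b i = c := by
      have hdiff : ∑ i, (m i - m' i) • b i = 0 := by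
        have heach : ∀ i, (m i - m' i) • b i = σ⁻¹ • (g i • b i) := by
          intro i
          rw [smul_smul]
          congr 1
          simp only [hm_def, hm'_def]
          rw [div_sub_div_same]
          have : max (g i) 0 - max (-g i) 0 = g i := by
            rcases le_total (g i) 0 with h | h
            · rw [max_eq_right h, max_eq_left (by linarith)]; ring
            · rw [max_eq_left h, max_eq_right (by linarith)]; ring
          rw [this, div_eq_inv_mul]
        rw [Finset.sum_congr rfl fun i _ => heach i, ← Finset.smul_sum, hgsum, smul_zero]
      have h2 : ∑ i, (m i - m' i) • b i = (∑ i, m i • b i) - ∑ i, m' i • b i := by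
        simp [sub_smul, Finset.sum_sub_distrib]
      rw [h2] at hdiff
      exact (sub_eq_zero.mp hdiff).symm
    -- c lies in every y j
    have hcy : ∀ j, c ∈ y j := by
      intro j
      by_cases hgj : 0 ≤ g j
      · -- use the m' representation, which has zero weight at j
        rw [← hc']
        refine subcombo_mem (hy j) (hy0 j) m' b hm' hm'1 fun i hi => ?_
        have hij : i ≠ j := by
          rintro rfl
          apply hi
          simp only [hm'_def]
          rw [max_eq_right (by linarith : -g i ≤ 0), zero_div]
        exact hzy i j hij (b i) (hb i)
      · -- g j < 0 : use the m representation
        rw [hc_def]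
        refine subcombo_mem (hy j) (hy0 j) m b hm (le_of_eq hm1) fun i hi => ?_
        have hij : i ≠ j := by
          rintro rfl
          apply hi
          simp only [hm_def]
          rw [max_eq_right (by linarith [not_le.mp hgj] : g i ≤ 0), zero_div]
        exact hzy i j hij (b i) (hb i)
    -- express p as a convex combination of c and points of x
    set α : ℝ := ∑ i, m i / v i with hα_def
    have hα1 : 1 ≤ α := by
      rw [← hm1, hα_def]
      refine Finset.sum_le_sum fun i _ => ?_
      rw [le_div_iff₀ (hvpos i)]
      calc m i * v i ≤ m i * 1 := by
            exact mul_le_mul_of_nonneg_left (hv1 i) (hm i)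
        _ = m i := mul_one _
    have hαpos : 0 < α := lt_of_lt_of_le one_pos hα1
    have hsum2 : ∑ i, m i * u i / v i = α - 1 := by
      rw [hα_def, ← hm1, ← Finset.sum_sub_distrib]
      refine Finset.sum_congr rfl fun i _ => ?_
      have hui : u i = 1 - v i := by linarith [huv i]
      field_simp [hui, (hvpos i).ne']
      rw [hui]
    have hrep : α • p = c + ∑ i, (m i * u i / v i) • a i := by
      have hbi : ∀ i, m i • b i = (m i / v i) • p - (m i * u i / v i) • a i := by
        intro i
        have hvb : v i • b i = p - u i • a i := by
          rw [← hp' i]; abel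
        calc m i • b i = (m i / v i) • (v i • b i) := by
              rw [smul_smul]
              congr 1
              exact (div_mul_cancel₀ (m i) (hvpos i).ne').symm
          _ = (m i / v i) • (p - u i • a i) := by rw [hvb]
          _ = (m i / v i) • p - (m i / v i * u i) • a i := by
              rw [smul_sub, smul_smul]
          _ = (m i / v i) • p - (m i * u i / v i) • a i := by
              congr 2
              ring
      have : c = ∑ i, ((m i / v i) • p - (m i * u i / v i) • a i) := by
        rw [hc_def]
        exact Finset.sum_congr rfl fun i _ => hbi i
      rw [this, Finset.sum_sub_distrib, ← Finset.sum_smul, ← hα_def]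
      abel
    have hpeq : p = α⁻¹ • c + ∑ i, (α⁻¹ * (m i * u i / v i)) • a i := by
      have h1 : α⁻¹ • (α • p) = p := by
        rw [smul_smul, inv_mul_cancel₀ hαpos.ne', one_smul]
      rw [← h1, hrep]
      simp only [smul_add, Finset.smul_sum, smul_smul]
    -- conclude via a sub-convex combination indexed by Option
    set W : Option (Fin (n + 1)) → ℝ :=
      fun o => o.elim α⁻¹ (fun i => α⁻¹ * (m i * u i / v i)) with hW_def
    set Z : Option (Fin (n + 1)) → (Fin n → ℝ) := fun o => o.elim c a with hZ_def
    have hfin : (∑ o : Option (Fin (n + 1)), W o • Z o) ∈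
        convexHull ℝ (x ∪ ⋂ i, y i) := by
      refine subcombo_mem (Y := convexHull ℝ (x ∪ ⋂ i, y i)) (convex_convexHull ℝ _)
        (subset_convexHull ℝ _ (Or.inl hx0)) W Z ?_ ?_ ?_
      · rintro (_ | i)
        · simp [hW_def, inv_nonneg, hαpos.le]
        · simp only [hW_def, Option.elim]
          have := hm i
          have := hu i
          have := (hvpos i).le
          positivity
      · rw [Fintype.sum_option]
        simp only [hW_def, Option.elim]
        rw [← Finset.mul_sum, hsum2]
        field_simp
        linarith
      · rintro (_ | i) _
        · exact subset_convexHull ℝ _ (Or.inr (mem_iInter.mpr hcy))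
        · exact subset_convexHull ℝ _ (Or.inl (ha i))
    rw [Fintype.sum_option] at hfin
    simp only [hW_def, hZ_def, Option.elim] at hfin
    rwa [← hpeq] at hfin
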